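/- For the k-Toffoli correctness proof (Theorem 2 structure): with the three control conditions C₁ = [x_k = 0], C₂ = [x_k=0 ∧ i*≠⊥ ∧ x_{i*} odd] ∨ [x_k=1 ∧ (i*=⊥ ∨ x_{i*} even)], C₃ = [x_k=0 ∧ i*≠⊥ ∧ x_{i*} even] ∨ [x_k=1 ∧ (i*=⊥ ∨ x_{i*} even)], an odd number of C₁, C₂, C₃ hold if and only if x₁ = ⋯ = x_k = 0. -/
import Mathlib


/-- The case analysis of Theorem 2: with `i*` the largest index `i < k-1` (0-based:
`i < k-1`) with `x_i ≠ 0`, and conditions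
`C₁ = [x_k = 0]`,
`C₂ = [x_k = 0 ∧ i* ≠ ⊥ ∧ x_{i*} odd] ∨ [x_k = 1 ∧ (i* = ⊥ ∨ x_{i*} even)]`,
`C₃ = [x_k = 0 ∧ i* ≠ ⊥ ∧ x_{i*} even] ∨ [x_k = 1 ∧ (i* = ⊥ ∨ x_{i*} even)]`,
an odd number of `C₁, C₂, C₃` hold iff `x = 0^k`. -/
theorem stmt_15 (d k : ℕ) (hd : 3 ≤ d) (hk : 2 ≤ k) (x : Fin k → Fin d) :
    let z : Fin d := ⟨0, by omega⟩
    let o : Fin d := ⟨1, by omega⟩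
    let last : Fin k := ⟨k - 1, by omega⟩
    -- `LN i` : `i` is the last nonzero index among `x₁, …, x_{k-1}` (i.e. `i = i*`)
    let LN : Fin k → Prop := fun i =>
      (i : ℕ) < k - 1 ∧ x i ≠ z ∧ ∀ j : Fin k, (i : ℕ) < (j : ℕ) → (j : ℕ) < k - 1 → x j = z
    -- `A` : `i* ≠ ⊥` and `x_{i*}` is odd
    let A : Prop := ∃ i, LN i ∧ ((x i : ℕ)) % 2 = 1
    let C₁ : Prop := x last = z
    let C₂ : Prop := (x last = z ∧ A) ∨ (x last = o ∧ ¬ A)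
    let C₃ : Prop := (x last = z ∧ ∃ i, LN i ∧ ((x i : ℕ)) % 2 = 0) ∨ (x last = o ∧ ¬ A)
    (Xor' (Xor' C₁ C₂) C₃ ↔ ∀ i, x i = z) := by
  intro z o last LN A C₁ C₂ C₃
  have hzo : z ≠ o := by
    intro h; exact absurd (congrArg Fin.val h) (by simp)
  have huniq : ∀ i j : Fin k, LN i → LN j → i = j := by
    intro i j hi hj
    by_contra hne
    rcases lt_or_gt_of_ne (fun h : (i:ℕ) = (j:ℕ) => hne (Fin.ext h)) with h | h
    · exact hj.2.1 (hi.2.2 j h hj.1)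
    · exact hi.2.1 (hj.2.2 i h hi.1)
  constructor
  · intro hx
    by_contra hne
    push_neg at hne
    obtain ⟨i0, hi0⟩ := hne
    by_cases hlast : x last = z
    · -- i0 is not last, so i0 < k-1; get maximal LN witness
      have hi0lt : (i0:ℕ) < k - 1 := by
        rcases lt_or_ge (i0:ℕ) (k-1) with h | h
        · exact h
        · exfalso; apply hi0
          have : i0 = last := Fin.ext (by have := i0.isLt; simp [last]; omega)
          rw [this]; exact hlast
      set S : Finset (Fin k) := Finset.univ.filter (fun i => (i:ℕ) < k - 1 ∧ x i ≠ z) with hS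
      have hSne : S.Nonempty := ⟨i0, by simp [hS, hi0lt, hi0]⟩
      set m := S.max' hSne with hm
      have hmS : m ∈ S := S.max'_mem hSne
      simp only [hS, Finset.mem_filter] at hmS
      have hLNm : LN m := by
        refine ⟨hmS.2.1, hmS.2.2, ?_⟩
        intro j hj1 hj2
        by_contra hjz
        have hjS : j ∈ S := by simp [hS, hj2, hjz]
        have := S.le_max' j hjS
        have : (j:ℕ) ≤ (m:ℕ) := this
        omega
      have hA : A ↔ (x m : ℕ) % 2 = 1 := by
        constructor
        · rintro ⟨i, hi, hodd⟩; rwa [huniq m i hLNm hi]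
        · intro h; exact ⟨m, hLNm, h⟩
      have hE : (∃ i, LN i ∧ ((x i : ℕ)) % 2 = 0) ↔ (x m : ℕ) % 2 = 0 := by
        constructor
        · rintro ⟨i, hi, hev⟩; rwa [huniq m i hLNm hi]
        · intro h; exact ⟨m, hLNm, h⟩
      have hC1 : C₁ := hlast
      have hno : ¬ (x last = o) := by rw [hlast]; exact fun h => hzo h
      rcases Nat.mod_two_eq_zero_or_one ((x m : ℕ)) with hp | hp
      · have hC2 : ¬ C₂ := by
          rintro (⟨_, hA'⟩ | ⟨ho, _⟩)
          · rw [hA] at hA'; omega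
          · exact hno ho
        have hC3 : C₃ := Or.inl ⟨hlast, hE.mpr hp⟩
        rcases hx with ⟨_, hn3⟩ | ⟨_, hn⟩
        · exact hn3 hC3
        · exact hn (Or.inl ⟨hC1, hC2⟩)
      · have hC2 : C₂ := Or.inl ⟨hlast, hA.mpr hp⟩
        have hC3 : ¬ C₃ := by
          rintro (⟨_, hE'⟩ | ⟨ho, _⟩)
          · rw [hE] at hE'; omega
          · exact hno ho
        rcases hx with ⟨hxor, _⟩ | ⟨h3, _⟩
        · rcases hxor with ⟨_, h2⟩ | ⟨_, h1⟩
          · exact h2 hC2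
          · exact h1 hC1
        · exact hC3 h3
    · -- x last ≠ z: C₁ false, C₂ ↔ C₃
      have hC1 : ¬ C₁ := hlast
      have h23 : C₂ ↔ C₃ := by
        constructor
        · rintro (⟨h, _⟩ | h); exact absurd h hlast; exact Or.inr h
        · rintro (⟨h, _⟩ | h); exact absurd h hlast; exact Or.inr h
      rcases hx with ⟨hxor, hn3⟩ | ⟨h3, hn⟩
      · rcases hxor with ⟨h1, _⟩ | ⟨h2, _⟩
        · exact hC1 h1
        · exact hn3 (h23.mp h2)
      · exact hn (Or.inr ⟨h23.mpr h3, hC1⟩)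
  · intro hall
    have hC1 : C₁ := hall last
    have hnoLN : ∀ i, ¬ LN i := fun i hi => hi.2.1 (hall i)
    have hC2 : ¬ C₂ := by
      rintro (⟨_, i, hi, _⟩ | ⟨ho, _⟩)
      · exact hnoLN i hi
      · exact hzo ((hall last) ▸ ho)
    have hC3 : ¬ C₃ := by
      rintro (⟨_, i, hi, _⟩ | ⟨ho, _⟩)
      · exact hnoLN i hi
      · exact hzo ((hall last) ▸ ho)
    exact Or.inl ⟨Or.inl ⟨hC1, hC2⟩, hC3⟩
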